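/- For every β > 0 and J > 0, the thermodynamic limit of the Curie–Weiss pressure exists and is given by the variational formula lim_{N→∞} (1/N) ln Z_N(β) = sup_{m̃ ∈ [-1,1]} { ln 2 + ln cosh(βJ m̃) − (βJ/2) m̃² }. -/

import Mathlib

open Real Filter

/-- The value of a spin: `true ↦ 1`, `false ↦ -1`. -/
noncomputable def spin (b : Bool) : ℝ := if b then 1 else -1

/-- The magnetization per spin of a configuration `σ ∈ {-1,1}^N`. -/
noncomputable def mag (N : ℕ) (σ : Fin N → Bool) : ℝ := (1 / (N : ℝ)) * ∑ i, spin (σ i)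

/-- The Curie–Weiss partition function `Z_N(β) = ∑_σ exp((βJN/2) m(σ)²)`. -/
noncomputable def Zcw (N : ℕ) (J β : ℝ) : ℝ :=
  ∑ σ : Fin N → Bool, Real.exp (β * J * (N : ℝ) / 2 * (mag N σ) ^ 2)

lemma Nmag (N : ℕ) (σ : Fin N → Bool) : (N : ℝ) * mag N σ = ∑ i, spin (σ i) := by
  rcases Nat.eq_zero_or_pos N with h | h
  · subst h; simp [mag]
  · have hN : (N : ℝ) ≠ 0 := Nat.cast_ne_zero.mpr h.ne'
    rw [mag, ← mul_assoc, mul_one_div_cancel hN, one_mul]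

lemma sum_exp_field (N : ℕ) (h : ℝ) :
    ∑ σ : Fin N → Bool, Real.exp (h * ∑ i, spin (σ i)) = (2 * Real.cosh h) ^ N := by
  have he : ∀ σ : Fin N → Bool,
      Real.exp (h * ∑ i, spin (σ i)) = ∏ i, Real.exp (h * spin (σ i)) := by
    intro σ; rw [← Real.exp_sum, Finset.mul_sum]
  simp_rw [he]
  rw [← Fintype.prod_sum fun (_ : Fin N) (b : Bool) => Real.exp (h * spin b)]
  have hb : ∑ b : Bool, Real.exp (h * spin b) = 2 * Real.cosh h := by
    simp [spin, Real.cosh_eq]; ring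
  rw [Finset.prod_congr rfl fun i _ => hb, Finset.prod_const, Finset.card_univ,
    Fintype.card_fin]

lemma key_sum (a t : ℝ) (N : ℕ) :
    ∑ σ : Fin N → Bool, Real.exp (a * N * t * mag N σ - a * N * t ^ 2 / 2)
      = Real.exp ((N : ℝ) * (Real.log 2 + Real.log (Real.cosh (a * t)) - a / 2 * t ^ 2)) := by
  have h1 : ∀ σ : Fin N → Bool,
      a * N * t * mag N σ - a * N * t ^ 2 / 2
        = (a * t) * (∑ i, spin (σ i)) - a * N * t ^ 2 / 2 := by
    intro σ; rw [← Nmag]; ring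
  simp_rw [h1, Real.exp_sub, ← Finset.sum_div, sum_exp_field]
  have hc : (0 : ℝ) < 2 * Real.cosh (a * t) := by positivity
  rw [← Real.exp_log hc, ← Real.exp_nat_mul, ← Real.exp_sub,
    Real.log_mul two_ne_zero (Real.cosh_pos (x := a * t)).ne']
  congr 1; ring

lemma Zcw_pos (N : ℕ) (J β : ℝ) : 0 < Zcw N J β :=
  Finset.sum_pos (fun σ _ => Real.exp_pos _) Finset.univ_nonempty

lemma sum_spin_eq (N : ℕ) (σ : Fin N → Bool) :
    ∑ i, spin (σ i) = 2 * ((Finset.univ.filter fun i => σ i).card : ℝ) - N := by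
  have : ∀ i, spin (σ i) = 2 * (if σ i then (1:ℝ) else 0) - 1 := by
    intro i; simp only [spin]; split <;> norm_num
  simp_rw [this, Finset.sum_sub_distrib, ← Finset.mul_sum, Finset.sum_boole,
    Finset.sum_const, Finset.card_univ, Fintype.card_fin, nsmul_eq_mul, mul_one]

theorem cw_pressure_limit (β J : ℝ) (hβ : 0 < β) (hJ : 0 < J) :
    Tendsto (fun N : ℕ => (1 / (N : ℝ)) * Real.log (Zcw N J β)) atTop
      (nhds (sSup ((fun mt : ℝ =>
        Real.log 2 + Real.log (Real.cosh (β * J * mt)) - β * J / 2 * mt ^ 2) ''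
          Set.Icc (-1 : ℝ) 1))) := by
  set a : ℝ := β * J with ha_def
  have ha : 0 < a := mul_pos hβ hJ
  set f : ℝ → ℝ := fun mt =>
    Real.log 2 + Real.log (Real.cosh (β * J * mt)) - β * J / 2 * mt ^ 2 with hf_def
  set F : ℝ := sSup (f '' Set.Icc (-1 : ℝ) 1) with hF_def
  have hfa : ∀ t : ℝ, f t = Real.log 2 + Real.log (Real.cosh (a * t)) - a / 2 * t ^ 2 := by
    intro t; rfl
  have hcont : Continuous f := by
    apply Continuous.sub
    · exact continuous_const.add
        ((Real.continuous_cosh.comp (continuous_const.mul continuous_id)).log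
          (fun x => (Real.cosh_pos _).ne'))
    · exact continuous_const.mul (continuous_pow 2)
  have hne : (f '' Set.Icc (-1 : ℝ) 1).Nonempty :=
    ⟨f 0, ⟨0, by norm_num, rfl⟩⟩
  have hbdd : BddAbove (f '' Set.Icc (-1 : ℝ) 1) :=
    (isCompact_Icc.image hcont).bddAbove
  -- the exponent of Zcw rewritten
  have hZeq : ∀ N : ℕ, Zcw N J β
      = ∑ σ : Fin N → Bool, Real.exp (a * N / 2 * (mag N σ) ^ 2) := by
    intro N; rfl
  -- Lower bound
  have hlow : ∀ N : ℕ, 1 ≤ N → F ≤ (1 / (N : ℝ)) * Real.log (Zcw N J β) := by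
    intro N hN
    have hNpos : (0 : ℝ) < N := by exact_mod_cast hN
    apply csSup_le hne
    rintro y ⟨t, ht, rfl⟩
    have hterm : ∀ σ : Fin N → Bool,
        Real.exp (a * N * t * mag N σ - a * N * t ^ 2 / 2)
          ≤ Real.exp (a * N / 2 * (mag N σ) ^ 2) := by
      intro σ
      apply Real.exp_le_exp.mpr
      have hsq : 0 ≤ (mag N σ - t) ^ 2 := sq_nonneg _
      have haN : 0 ≤ a * N := by positivity
      nlinarith [mul_nonneg haN hsq]
    have hZge : Real.exp ((N : ℝ) * f t) ≤ Zcw N J β := by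
      rw [hZeq N, hfa t, ← key_sum a t N]
      exact Finset.sum_le_sum fun σ _ => hterm σ
    have := Real.log_le_log (Real.exp_pos _) hZge
    rw [Real.log_exp] at this
    rw [one_div, ← div_eq_inv_mul, le_div_iff₀ hNpos]
    calc f t * N = (N : ℝ) * f t := by ring
    _ ≤ Real.log (Zcw N J β) := this
  -- Upper bound
  have hup : ∀ N : ℕ, 1 ≤ N →
      (1 / (N : ℝ)) * Real.log (Zcw N J β) ≤ F + Real.log ((N : ℝ) + 1) / N := by
    intro N hN
    have hNpos : (0 : ℝ) < N := by exact_mod_cast hN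
    have hNne : (N : ℝ) ≠ 0 := hNpos.ne'
    -- grid points
    set tk : ℕ → ℝ := fun k => 2 * k / N - 1 with htk_def
    have hZle : Zcw N J β ≤ ((N : ℝ) + 1) * Real.exp ((N : ℝ) * F) := by
      have hσ : ∀ σ : Fin N → Bool,
          Real.exp (a * N / 2 * (mag N σ) ^ 2)
            ≤ ∑ k ∈ Finset.range (N + 1),
                Real.exp (a * N * tk k * mag N σ - a * N * (tk k) ^ 2 / 2) := by
        intro σ
        set k₀ : ℕ := (Finset.univ.filter fun i => σ i).card with hk0
        have hk₀mem : k₀ ∈ Finset.range (N + 1) := by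
          simp only [Finset.mem_range, Nat.lt_succ_iff, hk0]
          exact (Finset.card_filter_le _ _).trans (by simp)
        have hmageq : mag N σ = tk k₀ := by
          simp only [mag, htk_def, sum_spin_eq]
          field_simp
          rw [hk0]
        have : Real.exp (a * N / 2 * (mag N σ) ^ 2)
            = Real.exp (a * N * tk k₀ * mag N σ - a * N * (tk k₀) ^ 2 / 2) := by
          rw [hmageq]; congr 1; ring
        rw [this]
        exact Finset.single_le_sum
          (f := fun k => Real.exp (a * N * tk k * mag N σ - a * N * (tk k) ^ 2 / 2))
          (fun k _ => (Real.exp_pos _).le) hk₀mem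
      calc Zcw N J β ≤ ∑ σ : Fin N → Bool, ∑ k ∈ Finset.range (N + 1),
            Real.exp (a * N * tk k * mag N σ - a * N * (tk k) ^ 2 / 2) := by
            rw [hZeq N]; exact Finset.sum_le_sum fun σ _ => hσ σ
      _ = ∑ k ∈ Finset.range (N + 1), ∑ σ : Fin N → Bool,
            Real.exp (a * N * tk k * mag N σ - a * N * (tk k) ^ 2 / 2) :=
            Finset.sum_comm
      _ = ∑ k ∈ Finset.range (N + 1), Real.exp ((N : ℝ) * f (tk k)) := by
            refine Finset.sum_congr rfl fun k _ => ?_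
            rw [key_sum a (tk k) N, hfa]
      _ ≤ ∑ k ∈ Finset.range (N + 1), Real.exp ((N : ℝ) * F) := by
            refine Finset.sum_le_sum fun k hk => ?_
            apply Real.exp_le_exp.mpr
            apply mul_le_mul_of_nonneg_left _ hNpos.le
            apply le_csSup hbdd
            refine ⟨tk k, ?_, rfl⟩
            simp only [Finset.mem_range, Nat.lt_succ_iff] at hk
            constructor
            · simp only [htk_def]
              have : (0 : ℝ) ≤ 2 * k / N := by positivity
              linarith
            · simp only [htk_def]
              have hkN : (k : ℝ) ≤ N := by exact_mod_cast hk
              have h2 : 2 * (k : ℝ) / N ≤ 2 := by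
                rw [div_le_iff₀ hNpos]; nlinarith
              linarith
      _ = ((N : ℝ) + 1) * Real.exp ((N : ℝ) * F) := by
            rw [Finset.sum_const, Finset.card_range, nsmul_eq_mul]
            push_cast; ring
    have hlog := Real.log_le_log (Zcw_pos N J β) hZle
    rw [Real.log_mul (by positivity) (Real.exp_pos _).ne', Real.log_exp] at hlog
    rw [one_div, ← div_eq_inv_mul, div_le_iff₀ hNpos]
    calc Real.log (Zcw N J β) ≤ Real.log ((N : ℝ) + 1) + (N : ℝ) * F := hlog
    _ = (F + Real.log ((N : ℝ) + 1) / N) * N := by field_simp; ring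
  -- squeeze
  have hlogN : Tendsto (fun N : ℕ => Real.log ((N : ℝ) + 1) / N) atTop (nhds 0) := by
    have h1 : Tendsto (fun x : ℝ => Real.log (x + 1) / x) atTop (nhds 0) := by
      have ho : (fun x : ℝ => Real.log (x + 1)) =o[atTop] (fun x : ℝ => x + 1) :=
        Real.isLittleO_log_id_atTop.comp_tendsto
          (tendsto_atTop_add_const_right atTop (1 : ℝ) tendsto_id)
      have hO : (fun x : ℝ => x + 1) =O[atTop] (fun x : ℝ => x) := by
        apply Asymptotics.IsBigO.of_bound 2
        filter_upwards [eventually_ge_atTop (1 : ℝ)] with x hx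
        simp only [Real.norm_eq_abs]
        rw [abs_of_nonneg (by linarith : (0:ℝ) ≤ x + 1), abs_of_nonneg (by linarith : (0:ℝ) ≤ x)]
        linarith
      exact (ho.trans_isBigO hO).tendsto_div_nhds_zero
    exact h1.comp tendsto_natCast_atTop_atTop
  have hupperlim : Tendsto (fun N : ℕ => F + Real.log ((N : ℝ) + 1) / N) atTop (nhds F) := by
    have h := Tendsto.add (tendsto_const_nhds (α := ℕ) (x := F)) hlogN
    simpa using h
  apply tendsto_of_tendsto_of_tendsto_of_le_of_le' tendsto_const_nhds hupperlim
  · filter_upwards [eventually_ge_atTop 1] with N hN using hlow N hN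
  · filter_upwards [eventually_ge_atTop 1] with N hN using hup N hN
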